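/- Let B̄ be an invertible symmetric real 3×3 matrix, let (n, a, b) be an orthonormal triad of vectors in ℝ³ (n·n = a·a = b·b = 1, n·a = n·b = a·b = 0), let f′, g′, p, W₁, W₂ be real numbers, set B = (I + f′ a⊗n + g′ b⊗n) B̄ (I + f′ n⊗a + g′ n⊗b), and let T = −p I + 2W₁ B − 2W₂ B⁻¹. Then the shear stress component a·(T n) equals 2W₁( n·(B̄a) + f′ n·(B̄n) ) − 2W₂( n·(B̄⁻¹a) − f′ a·(B̄⁻¹a) − g′ a·(B̄⁻¹b) ). -/

import Mathlib

open Matrix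

private lemma vmv_mul_vmv (u v w x : Fin 3 → ℝ) :
    vecMulVec u v * vecMulVec w x = (v ⬝ᵥ w) • vecMulVec u x := by
  ext i j
  simp only [mul_apply, vecMulVec_apply, Matrix.smul_apply, dotProduct, smul_eq_mul,
    Finset.sum_mul]
  exact Finset.sum_congr rfl fun k _ => by ring

private lemma vmv_mulVec (u v w : Fin 3 → ℝ) :
    (vecMulVec u v) *ᵥ w = (v ⬝ᵥ w) • u := by
  ext i
  simp only [mulVec, dotProduct, vecMulVec_apply, Pi.smul_apply, smul_eq_mul,
    Finset.sum_mul]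
  exact Finset.sum_congr rfl fun k _ => by ring

private lemma symm_dot (M : Matrix (Fin 3) (Fin 3) ℝ) (h : M.IsSymm)
    (x y : Fin 3 → ℝ) : x ⬝ᵥ M *ᵥ y = y ⬝ᵥ M *ᵥ x := by
  rw [dotProduct_mulVec, ← mulVec_transpose, h.eq, dotProduct_comm]

/-- Shear stress component `T_{ξη} = a·(T n)` for the Cauchy stress
`T = −p I + 2W₁ B − 2W₂ B⁻¹` of the motion. -/
theorem shear_stress_a_component
    (Bbar : Matrix (Fin 3) (Fin 3) ℝ) (hB : Bbar.IsSymm)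
    (hBinv : IsUnit Bbar.det)
    (n a b : Fin 3 → ℝ)
    (hnn : n ⬝ᵥ n = 1) (haa : a ⬝ᵥ a = 1) (hbb : b ⬝ᵥ b = 1)
    (hna : n ⬝ᵥ a = 0) (hnb : n ⬝ᵥ b = 0) (hab : a ⬝ᵥ b = 0)
    (f' g' p W₁ W₂ : ℝ)
    (B : Matrix (Fin 3) (Fin 3) ℝ)
    (hBdef : B = (1 + f' • vecMulVec a n + g' • vecMulVec b n) * Bbar *
      (1 + f' • vecMulVec n a + g' • vecMulVec n b))
    (T : Matrix (Fin 3) (Fin 3) ℝ)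
    (hT : T = (-p) • (1 : Matrix (Fin 3) (Fin 3) ℝ) + (2 * W₁) • B - (2 * W₂) • B⁻¹) :
    a ⬝ᵥ T.mulVec n =
      2 * W₁ * ((n ⬝ᵥ Bbar.mulVec a) + f' * (n ⬝ᵥ Bbar.mulVec n))
      - 2 * W₂ * ((n ⬝ᵥ Bbar⁻¹.mulVec a) - f' * (a ⬝ᵥ Bbar⁻¹.mulVec a)
          - g' * (a ⬝ᵥ Bbar⁻¹.mulVec b)) := by
  have han : a ⬝ᵥ n = 0 := by rw [dotProduct_comm]; exact hna
  have hbn : b ⬝ᵥ n = 0 := by rw [dotProduct_comm]; exact hnb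
  have hba : b ⬝ᵥ a = 0 := by rw [dotProduct_comm]; exact hab
  set F := (1 + f' • vecMulVec a n + g' • vecMulVec b n) with hF
  set G := (1 + f' • vecMulVec n a + g' • vecMulVec n b) with hG
  set Fi := (1 - f' • vecMulVec a n - g' • vecMulVec b n) with hFi
  set Gi := (1 - f' • vecMulVec n a - g' • vecMulVec n b) with hGi
  have hGGi : G * Gi = 1 := by
    rw [hG, hGi]
    simp only [mul_sub, mul_add, add_mul, sub_mul, mul_one, one_mul,
      Matrix.smul_mul, Matrix.mul_smul, vmv_mul_vmv, han, hbn, zero_smul,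
      smul_zero]
    abel
  have hFFi : F * Fi = 1 := by
    rw [hF, hFi]
    simp only [mul_sub, mul_add, add_mul, sub_mul, mul_one, one_mul,
      Matrix.smul_mul, Matrix.mul_smul, vmv_mul_vmv, hna, hnb, zero_smul,
      smul_zero]
    abel
  have hBC : B * (Gi * Bbar⁻¹ * Fi) = 1 := by
    rw [hBdef]
    calc F * Bbar * G * (Gi * Bbar⁻¹ * Fi)
        = F * ((Bbar * ((G * Gi) * Bbar⁻¹)) * Fi) := by
          simp only [mul_assoc]
      _ = 1 := by
          rw [hGGi, one_mul, mul_nonsing_inv Bbar hBinv, one_mul, hFFi]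
  have hBinvEq : B⁻¹ = Gi * Bbar⁻¹ * Fi := inv_eq_right_inv hBC
  have hBisymm : (Bbar⁻¹).IsSymm := by
    unfold Matrix.IsSymm
    rw [transpose_nonsing_inv, hB.eq]
  -- compute a ⬝ᵥ B *ᵥ n
  have hGn : G *ᵥ n = n := by
    rw [hG]
    simp [add_mulVec, smul_mulVec, vmv_mulVec, han, hbn]
  have haBn : a ⬝ᵥ B *ᵥ n = n ⬝ᵥ Bbar *ᵥ a + f' * (n ⬝ᵥ Bbar *ᵥ n) := by
    rw [hBdef, ← mulVec_mulVec, hGn, ← mulVec_mulVec, hF]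
    simp only [add_mulVec, smul_mulVec, vmv_mulVec, one_mulVec,
      dotProduct_add, dotProduct_smul, smul_eq_mul, haa, hab, hba,
      smul_dotProduct, dotProduct_comm a n]
    rw [symm_dot Bbar hB a n]
    ring_nf
  have hFin : Fi *ᵥ n = n - f' • a - g' • b := by
    rw [hFi]
    simp [sub_mulVec, smul_mulVec, vmv_mulVec, hnn]
  have haBin : a ⬝ᵥ B⁻¹ *ᵥ n =
      n ⬝ᵥ Bbar⁻¹ *ᵥ a - f' * (a ⬝ᵥ Bbar⁻¹ *ᵥ a) - g' * (a ⬝ᵥ Bbar⁻¹ *ᵥ b) := by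
    rw [hBinvEq, ← mulVec_mulVec, ← mulVec_mulVec, hFin, hGi]
    simp only [mulVec_sub, mulVec_smul, sub_mulVec, smul_mulVec,
      vmv_mulVec, one_mulVec, dotProduct_sub, dotProduct_smul, smul_eq_mul,
      smul_dotProduct, han]
    rw [symm_dot Bbar⁻¹ hBisymm a n]
    ring
  rw [hT]
  simp only [add_mulVec, sub_mulVec, smul_mulVec, one_mulVec,
    dotProduct_add, dotProduct_sub, dotProduct_smul, smul_eq_mul, han,
    haBn, haBin]
  ring
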